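/- For all x ≥ 0 and L > 0, Ψ₂(x; L) ≥ Ψ₁(x; L/3), where Ψ₂(x; L) = exp((2/L²)·h₂(Lx)) − 1 and Ψ₁(x; M) = exp((2/M²)·h₁(Mx)) − 1. -/

import Mathlib

noncomputable def h₁ (x : ℝ) : ℝ := 1 + x - Real.sqrt (1 + 2 * x)
noncomputable def h₂ (x : ℝ) : ℝ := (1 + x) * Real.log (1 + x) - x
noncomputable def Ψ₁ (x M : ℝ) : ℝ := Real.exp ((2 / M ^ 2) * h₁ (M * x)) - 1
noncomputable def Ψ₂ (x L : ℝ) : ℝ := Real.exp ((2 / L ^ 2) * h₂ (L * x)) - 1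

-- Padé [2/2] lower bound for log(1+u)
lemma log_pade (u : ℝ) (hu : 0 ≤ u) :
    (3*u^2 + 6*u) / (u^2 + 6*u + 6) ≤ Real.log (1 + u) := by
  set φ : ℝ → ℝ := fun v => Real.log (1 + v) - (3*v^2 + 6*v) / (v^2 + 6*v + 6) with hφ
  have hden : ∀ v : ℝ, 0 ≤ v → (0:ℝ) < v^2 + 6*v + 6 := by intro v hv; nlinarith
  have hderiv : ∀ v ∈ Set.Ioi (0:ℝ), HasDerivAt φ
      (1/(1+v) - (12*(v^2+3*v+3))/(v^2+6*v+6)^2) v := by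
    intro v hv
    have hv0 : (0:ℝ) < v := hv
    have h1 : HasDerivAt (fun w : ℝ => Real.log (1 + w)) (1/(1+v)) v := by
      have := (Real.hasDerivAt_log (by positivity : (1:ℝ) + v ≠ 0)).comp v
        ((hasDerivAt_id v).const_add 1)
      simpa [Function.comp_def] using this
    have hnum : HasDerivAt (fun w : ℝ => 3*w^2 + 6*w) (6*v + 6) v := by
      have h := ((hasDerivAt_pow 2 v).const_mul 3).add ((hasDerivAt_id v).const_mul 6)
      simp only [id] at h
      convert h using 1
      any_goals exact rfl
      push_cast
      ring
    have hden' : HasDerivAt (fun w : ℝ => w^2 + 6*w + 6) (2*v + 6) v := by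
      have h := (((hasDerivAt_pow 2 v)).add ((hasDerivAt_id v).const_mul 6)).add_const 6
      simp only [id] at h
      convert h using 1
      any_goals exact rfl
      push_cast
      ring
    have hd : (v^2 + 6*v + 6) ≠ 0 := ne_of_gt (hden v hv0.le)
    have h2 := hnum.div hden' hd
    have := h1.sub h2
    convert this using 1
    any_goals exact rfl
    have h1v : (1:ℝ) + v ≠ 0 := by positivity
    field_simp
    try ring
  have hcont : ContinuousOn φ (Set.Ici 0) := by
    apply ContinuousOn.sub
    · apply ContinuousOn.log (by fun_prop)
      intro v hv; simp only [Set.mem_Ici] at hv; positivity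
    · apply ContinuousOn.div (by fun_prop) (by fun_prop)
      intro v hv; exact ne_of_gt (hden v hv)
  have hmono : MonotoneOn φ (Set.Ici 0) := by
    apply monotoneOn_of_deriv_nonneg (convex_Ici 0) hcont
    · intro v hv
      rw [interior_Ici] at hv
      exact (hderiv v hv).differentiableAt.differentiableWithinAt
    · intro v hv
      rw [interior_Ici] at hv
      rw [(hderiv v hv).deriv]
      have hv0 : (0:ℝ) < v := hv
      have hd : (0:ℝ) < v^2 + 6*v + 6 := hden v hv0.le
      rw [sub_nonneg, div_le_div_iff₀ (by positivity) (by positivity)]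
      nlinarith [sq_nonneg v, sq_nonneg (v^2), pow_pos hv0 4]
  have h0 : φ 0 = 0 := by simp [hφ]
  have := hmono (Set.self_mem_Ici) (Set.mem_Ici.mpr hu) hu
  rw [h0] at this
  simpa [hφ, sub_nonneg] using this

lemma h2_ge_9h1 (u : ℝ) (hu : 0 ≤ u) : 9 * h₁ (u / 3) ≤ h₂ u := by
  set f : ℝ → ℝ := fun v => h₂ v - 9 * h₁ (v / 3) with hf
  have hsq : ∀ v : ℝ, 0 ≤ v → (0:ℝ) < 1 + 2 * (v/3) := by intro v hv; linarith
  have hderiv : ∀ v ∈ Set.Ioi (0:ℝ), HasDerivAt f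
      (Real.log (1 + v) - 3 + 3 / Real.sqrt (1 + 2 * (v/3))) v := by
    intro v hv
    have hv0 : (0:ℝ) < v := hv
    have h1v : (0:ℝ) < 1 + v := by linarith
    -- derivative of h₂
    have hlog : HasDerivAt (fun w : ℝ => Real.log (1 + w)) (1/(1+v)) v := by
      have := (Real.hasDerivAt_log (ne_of_gt h1v)).comp v
        ((hasDerivAt_id v).const_add 1)
      simpa [Function.comp_def] using this
    have hh2 : HasDerivAt (fun w : ℝ => (1 + w) * Real.log (1 + w) - w)
        (Real.log (1 + v)) v := by
      have hmul : HasDerivAt (fun w : ℝ => (1 + w) * Real.log (1 + w))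
          (1 * Real.log (1 + v) + (1 + v) * (1/(1+v))) v :=
        (((hasDerivAt_id v).const_add 1)).mul hlog
      have := hmul.sub (hasDerivAt_id v)
      convert this using 1
      any_goals exact rfl
      field_simp
      ring
    -- derivative of 9 * h₁ (v/3)
    have hin : (0:ℝ) < 1 + 2 * (v/3) := hsq v hv0.le
    have hsqrtpos : (0:ℝ) < Real.sqrt (1 + 2 * (v/3)) := Real.sqrt_pos.mpr hin
    have hinner : HasDerivAt (fun w : ℝ => 1 + 2 * (w/3)) (2/3) v := by
      have h := ((hasDerivAt_id v).const_mul ((2:ℝ)/3)).const_add 1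
      simp only [id] at h
      convert h using 1
      any_goals exact rfl
      · funext w; ring
      · norm_num
    have hsqrt : HasDerivAt (fun w : ℝ => Real.sqrt (1 + 2 * (w/3)))
        (1 / (2 * Real.sqrt (1 + 2 * (v/3))) * (2/3)) v :=
      (Real.hasDerivAt_sqrt (ne_of_gt hin)).comp v hinner
    have hh1 : HasDerivAt (fun w : ℝ => 9 * (1 + w/3 - Real.sqrt (1 + 2 * (w/3))))
        (3 - 3 / Real.sqrt (1 + 2 * (v/3))) v := by
      have hlin : HasDerivAt (fun w : ℝ => 1 + w/3) (1/3 : ℝ) v := by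
        have h := ((hasDerivAt_id v).const_mul ((1:ℝ)/3)).const_add 1
        simp only [id] at h
        convert h using 1
        any_goals exact rfl
        · funext w; ring
        · norm_num
      have := (hlin.sub hsqrt).const_mul (9:ℝ)
      convert this using 1
      any_goals exact rfl
      field_simp
      ring
    have := hh2.sub hh1
    have heq : f = fun w : ℝ => ((1 + w) * Real.log (1 + w) - w)
        - 9 * (1 + w/3 - Real.sqrt (1 + 2 * (w/3))) := by
      funext w; simp [hf, h₁, h₂]
    rw [heq]
    convert this using 1
    any_goals exact rfl
    ring
  have hcont : ContinuousOn f (Set.Ici 0) := by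
    have : ∀ v ∈ Set.Ici (0:ℝ), (1:ℝ) + v ≠ 0 := by
      intro v hv; simp only [Set.mem_Ici] at hv; positivity
    unfold f
    simp only [h₁, h₂]
    apply ContinuousOn.sub
    · exact ContinuousOn.sub (ContinuousOn.mul (by fun_prop)
        (ContinuousOn.log (by fun_prop) this)) (by fun_prop)
    · fun_prop
  have hmono : MonotoneOn f (Set.Ici 0) := by
    apply monotoneOn_of_deriv_nonneg (convex_Ici 0) hcont
    · intro v hv
      rw [interior_Ici] at hv
      exact (hderiv v hv).differentiableAt.differentiableWithinAt
    · intro v hv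
      rw [interior_Ici] at hv
      rw [(hderiv v hv).deriv]
      have hv0 : (0:ℝ) < v := hv
      set s := Real.sqrt (1 + 2 * (v/3)) with hs
      have hspos : (0:ℝ) < s := Real.sqrt_pos.mpr (hsq v hv0.le)
      have hs2 : s^2 = 1 + 2 * (v/3) := Real.sq_sqrt (hsq v hv0.le).le
      have hD : (0:ℝ) < v^2 + 6*v + 6 := by nlinarith
      have hpade := log_pade v hv0.le
      -- suffices: (3v²+6v)/D ≥ 3 - 3/s
      have key : 3 - 3/s ≤ (3*v^2 + 6*v) / (v^2 + 6*v + 6) := by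
        have h1 : 3 - 3/s = (3*s - 3)/s := by field_simp
        rw [h1, div_le_div_iff₀ hspos hD]
        nlinarith [sq_nonneg (s*(12*v+18) - 3*(v^2+6*v+6)), hs2, hD, hspos,
          pow_pos hv0 3, pow_pos hv0 4, mul_pos hspos hD]
      linarith
  have h0 : f 0 = 0 := by simp [hf, h₁, h₂]
  have := hmono (Set.self_mem_Ici) (Set.mem_Ici.mpr hu) hu
  rw [h0] at this
  simpa [hf, sub_nonneg] using this

theorem Psi2_ge_Psi1 (x L : ℝ) (hx : 0 ≤ x) (hL : 0 < L) :
    Ψ₂ x L ≥ Ψ₁ x (L / 3) := by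
  unfold Ψ₁ Ψ₂
  apply sub_le_sub_right
  apply Real.exp_le_exp.mpr
  have hL2 : (0:ℝ) < L^2 := by positivity
  have harg : (L/3) * x = (L * x) / 3 := by ring
  have hmain := h2_ge_9h1 (L * x) (by positivity)
  rw [harg]
  have : 2 / (L/3)^2 = 18 / L^2 := by
    field_simp
    ring
  rw [this]
  rw [div_mul_eq_mul_div, div_mul_eq_mul_div, div_le_div_iff₀ hL2 hL2]
  nlinarith
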